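/- Let X be a finite set, X* ⊆ X, 𝒟 = 2^X∖{∅}, and ρ a complete dataset. Let 𝒞 = {A ∪ E : E ∈ 2^{X*}} for some A ⊆ X∖X*, i.e., ℰ = 2^{X*} (nonessential test collection of type (i)). Then δ_ρ(𝒞) = 0, where δ_ρ(𝒞) = Σ_{(D,x): D∈𝒞, D∪x∉𝒞, x∉X*} K(ρ, D∪x, x) − Σ_{(E,y): E∉𝒞, E∪y∈𝒞, y∉X*} K(ρ, E∪y, y) + 1{X∈𝒞, ∅∉𝒞} − 1{∅∈𝒞, X∉𝒞}. -/
import Mathlib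

open Finset

variable {α : Type*} [Fintype α] [DecidableEq α]

/-- The Block–Marschak polynomial `K(ρ, D, x) = ∑_{F ⊇ D} (-1)^{|F \ D|} ρ(F, x)`. -/
noncomputable def bmK (ρ : Finset α → α → ℝ) (D : Finset α) (x : α) : ℝ :=
  ∑ E : Finset α, if D ⊆ E then (-1 : ℝ) ^ (E \ D).card * ρ E x else 0

/-- `δ_ρ(𝒞)`: the net observable outflow of `𝒞 ⊆ 2^X` when `𝒟 = 2^X ∖ {∅}`,
so an arc `(D, D ∪ {x})` is observable iff `x ∉ X*`. -/
noncomputable def deltaBM (Xstar : Finset α)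
    (ρ : Finset α → α → ℝ) (C : Finset (Finset α)) : ℝ :=
  (∑ D : Finset α, ∑ x : α,
      if x ∉ D ∧ x ∉ Xstar ∧ D ∈ C ∧ insert x D ∉ C then
        bmK ρ (insert x D) x else 0)
    - (∑ E : Finset α, ∑ y : α,
        if y ∉ E ∧ y ∉ Xstar ∧ E ∉ C ∧ insert y E ∈ C then
          bmK ρ (insert y E) y else 0)
    + (if Finset.univ ∈ C ∧ ∅ ∉ C then 1 else 0)
    - (if ∅ ∈ C ∧ Finset.univ ∉ C then 1 else 0)

lemma sum_superset_neg_one (D : Finset α) :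
    ∑ F : Finset α, (if D ⊆ F then (-1:ℝ)^(F\D).card else 0) = if D = univ then 1 else 0 := by
  rw [← Finset.sum_filter]
  have h1 : ∑ F ∈ univ.filter (fun F => D ⊆ F), (-1:ℝ)^(F\D).card
      = ∑ G ∈ Dᶜ.powerset, (-1:ℝ)^G.card := by
    apply Finset.sum_bij' (fun F _ => F \ D) (fun G _ => D ∪ G)
    · intro F hF
      simp only [mem_powerset]
      intro a ha; simp only [mem_sdiff] at ha; simp [ha.2]
    · intro G hG
      simp only [mem_filter, mem_univ, true_and]
      exact subset_union_left
    · intro F hF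
      simp only [mem_filter, mem_univ, true_and] at hF
      exact union_sdiff_of_subset hF
    · intro G hG
      simp only [mem_powerset] at hG
      rw [union_sdiff_cancel_left]
      rw [Finset.disjoint_left]
      intro a haD haG
      have := hG haG; simp at this; exact this haD
    · intros; rfl
  rw [h1]
  have := @Finset.sum_powerset_neg_one_pow_card α _ Dᶜ
  have h2 : ∑ G ∈ Dᶜ.powerset, (-1:ℝ)^G.card = ((∑ m ∈ Dᶜ.powerset, (-1 : ℤ) ^ m.card : ℤ) : ℝ) := by
    push_cast; rfl
  rw [h2, this]
  by_cases h : D = univ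
  · simp [h]
  · have : Dᶜ ≠ ∅ := by
      rw [ne_eq, compl_eq_empty_iff]; exact h
    simp [h, this]

lemma conservation (ρ : Finset α → α → ℝ)
    (hρ1 : ∀ D : Finset α, D.Nonempty → ∑ x ∈ D, ρ D x = 1) (D : Finset α) :
    (∑ y : α, if y ∈ D then bmK ρ D y else 0)
      - (∑ x : α, if x ∉ D then bmK ρ (insert x D) x else 0)
    = (if D = univ then 1 else 0) - (if D = ∅ then 1 else 0) := by
  have hin : (∑ y : α, if y ∈ D then bmK ρ D y else 0)
      = ∑ F : Finset α, (if D ⊆ F then (-1:ℝ)^(F\D).card * ∑ y ∈ D, ρ F y else 0) := by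
    simp only [bmK]
    have h0 : (∑ y : α, if y ∈ D then ∑ E : Finset α, (if D ⊆ E then (-1:ℝ)^(E\D).card * ρ E y else 0) else 0)
        = ∑ y : α, ∑ E : Finset α, (if y ∈ D then (if D ⊆ E then (-1:ℝ)^(E\D).card * ρ E y else 0) else 0) := by
      apply Finset.sum_congr rfl; intro y _; split <;> simp
    rw [h0, Finset.sum_comm]
    apply Finset.sum_congr rfl
    intro F _
    by_cases h : D ⊆ F
    · simp only [h, if_true, Finset.mul_sum]
      rw [← Finset.sum_filter]
      simp [Finset.filter_mem_eq_inter]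
    · simp [h]
  have hout : (∑ x : α, if x ∉ D then bmK ρ (insert x D) x else 0)
      = ∑ F : Finset α, (if D ⊆ F then -((-1:ℝ)^(F\D).card * ∑ x ∈ F \ D, ρ F x) else 0) := by
    simp only [bmK]
    have h0 : (∑ x : α, if x ∉ D then ∑ E : Finset α, (if insert x D ⊆ E then (-1:ℝ)^(E\insert x D).card * ρ E x else 0) else 0)
        = ∑ x : α, ∑ E : Finset α, (if x ∉ D then (if insert x D ⊆ E then (-1:ℝ)^(E\insert x D).card * ρ E x else 0) else 0) := by
      apply Finset.sum_congr rfl; intro x _; split <;> simp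
    rw [h0, Finset.sum_comm]
    apply Finset.sum_congr rfl
    intro F _
    by_cases h : D ⊆ F
    · rw [if_pos h]
      have h1 : ∀ x : α, (if x ∉ D then (if insert x D ⊆ F then (-1:ℝ)^(F\insert x D).card * ρ F x else 0) else 0)
          = if x ∈ F \ D then (-1:ℝ)^(F\insert x D).card * ρ F x else 0 := by
        intro x
        by_cases hx : x ∈ F \ D
        · rw [if_pos hx]
          rw [mem_sdiff] at hx
          rw [if_pos hx.2, if_pos (insert_subset hx.1 h)]
        · rw [if_neg hx]
          rw [mem_sdiff, not_and_or, not_not] at hx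
          rcases hx with hx | hx
          · have : ¬ insert x D ⊆ F := fun hs => hx (hs (mem_insert_self x D))
            by_cases hxD : x ∈ D <;> simp [hxD, this]
          · simp [hx]
      simp only [h1, Finset.sum_ite_mem, univ_inter]
      have h2 : ∀ x ∈ F \ D, (-1:ℝ)^(F\insert x D).card * ρ F x
          = -((-1:ℝ)^(F\D).card * ρ F x) := by
        intro x hx
        have hc : (F \ insert x D).card = (F\D).card - 1 := by
          rw [Finset.sdiff_insert, Finset.card_erase_of_mem hx]
        obtain ⟨k, hk⟩ := Nat.exists_eq_succ_of_ne_zero (Finset.card_ne_zero.mpr ⟨x, hx⟩)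
        rw [hc, hk]
        simp [pow_succ]
      rw [Finset.sum_congr rfl h2, Finset.mul_sum]
      simp
    · have hno : ∀ x, x ∉ D → ¬ insert x D ⊆ F := by
        intro x hx hsub
        exact h (fun a ha => hsub (mem_insert_of_mem ha))
      rw [if_neg h]
      apply Finset.sum_eq_zero
      intro x _
      by_cases hx : x ∈ D
      · simp [hx]
      · simp [hx, hno x hx]
  rw [hin, hout, ← Finset.sum_sub_distrib]
  have step : ∀ F : Finset α,
      ((if D ⊆ F then (-1:ℝ)^(F\D).card * ∑ y ∈ D, ρ F y else 0)
        - (if D ⊆ F then -((-1:ℝ)^(F\D).card * ∑ x ∈ F \ D, ρ F x) else 0))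
      = (if D ⊆ F then (-1:ℝ)^(F\D).card else 0)
        - (if F = ∅ then (if D = ∅ then 1 else 0) else 0) := by
    intro F
    by_cases h : D ⊆ F
    · have hsum : (-1:ℝ)^(F\D).card * ∑ y ∈ D, ρ F y
          - -((-1:ℝ)^(F\D).card * ∑ x ∈ F \ D, ρ F x)
          = (-1:ℝ)^(F\D).card * ∑ x ∈ F, ρ F x := by
        rw [← Finset.sum_sdiff h]; ring
      rw [if_pos h, if_pos h, if_pos h, hsum]
      by_cases hF : F = ∅
      · have hD : D = ∅ := subset_empty.mp (hF ▸ h)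
        simp [hF, hD]
      · rw [hρ1 F (nonempty_iff_ne_empty.mpr hF), if_neg hF, mul_one, sub_zero]
    · rw [if_neg h, if_neg h, if_neg h, sub_zero]
      by_cases hF : F = ∅
      · have : ¬ D = ∅ := fun hD => h (by simp [hD, hF])
        simp [hF, this]
      · simp [hF]
  rw [Finset.sum_congr rfl (fun F _ => step F), Finset.sum_sub_distrib,
    sum_superset_neg_one]
  congr 1
  simp

lemma reindex_insert (y : α) (g : Finset α → ℝ) :
    ∑ E : Finset α, (if y ∉ E then g (insert y E) else 0)
      = ∑ D : Finset α, (if y ∈ D then g D else 0) := by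
  rw [← Finset.sum_filter, ← Finset.sum_filter]
  refine Finset.sum_bij' (fun E _ => insert y E) (fun D _ => D.erase y)
    (fun E hE => ?_) (fun D hD => ?_) (fun E hE => ?_) (fun D hD => ?_) (fun E hE => ?_)
  · simp
  · simp
  · simp only [mem_filter, mem_univ, true_and] at hE
    exact erase_insert hE
  · simp only [mem_filter, mem_univ, true_and] at hD
    exact insert_erase hD
  · rfl

lemma memC (Xstar A : Finset α) (hA : A ⊆ Xstarᶜ) (B : Finset α) :
    B ∈ Xstar.powerset.image (fun E => A ∪ E) ↔ A ⊆ B ∧ B ⊆ A ∪ Xstar := by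
  simp only [mem_image, mem_powerset]
  constructor
  · rintro ⟨E, hE, rfl⟩
    exact ⟨subset_union_left, union_subset_union_right hE⟩
  · rintro ⟨h1, h2⟩
    refine ⟨B ∩ Xstar, inter_subset_right, ?_⟩
    ext b
    simp only [mem_union, mem_inter]
    constructor
    · rintro (hb | ⟨hb, _⟩)
      · exact h1 hb
      · exact hb
    · intro hb
      rcases mem_union.mp (h2 hb) with h | h
      · exact Or.inl h
      · exact Or.inr ⟨hb, h⟩

/-- For a complete dataset `ρ` and the nonessential test collection
`𝒞 = {A ∪ E : E ⊆ X*}` (i.e. `ℰ = 2^{X*}`), we have `δ_ρ(𝒞) = 0`. -/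
theorem stmt_11 (Xstar A : Finset α) (hA : A ⊆ Xstarᶜ)
    (ρ : Finset α → α → ℝ)
    (hρ0 : ∀ (D : Finset α) (x : α), 0 ≤ ρ D x)
    (hρ1 : ∀ D : Finset α, D.Nonempty → ∑ x ∈ D, ρ D x = 1) :
    deltaBM Xstar ρ (Xstar.powerset.image (fun E => A ∪ E)) = 0 := by
  classical
  rw [deltaBM]
  set C := Xstar.powerset.image (fun E => A ∪ E) with hCdef
  have hC : ∀ B : Finset α, B ∈ C ↔ A ⊆ B ∧ B ⊆ A ∪ Xstar := memC Xstar A hA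
  have hAX : ∀ a ∈ A, a ∉ Xstar := fun a ha => by simpa using hA ha
  have hErase : ∀ x ∈ Xstar, ∀ D : Finset α, x ∈ D → (D.erase x ∈ C ↔ D ∈ C) := by
    intro x hx D hxD
    rw [hC, hC]
    constructor
    · rintro ⟨h1, h2⟩
      refine ⟨h1.trans (erase_subset x D), fun b hb => ?_⟩
      by_cases hbx : b = x
      · subst hbx; exact mem_union_right _ hx
      · exact h2 (mem_erase.mpr ⟨hbx, hb⟩)
    · rintro ⟨h1, h2⟩
      refine ⟨fun a ha => mem_erase.mpr ⟨?_, h1 ha⟩, (erase_subset x D).trans h2⟩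
      rintro rfl; exact hAX a ha hx
  -- Step 1 : drop the redundant conjuncts in the two observable-arc sums
  have eS1 : (∑ D : Finset α, ∑ x : α,
        if x ∉ D ∧ x ∉ Xstar ∧ D ∈ C ∧ insert x D ∉ C then bmK ρ (insert x D) x else 0)
      = ∑ D : Finset α, ∑ x : α,
        (if x ∉ D ∧ x ∉ Xstar ∧ D ∈ C then bmK ρ (insert x D) x else 0) := by
    refine Finset.sum_congr rfl fun D _ => Finset.sum_congr rfl fun x _ => ?_
    refine if_congr ⟨fun h => ⟨h.1, h.2.1, h.2.2.1⟩, fun h => ⟨h.1, h.2.1, h.2.2, ?_⟩⟩ rfl rfl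
    intro hmem
    have hx : x ∈ A ∪ Xstar := ((hC _).mp hmem).2 (mem_insert_self x D)
    rcases mem_union.mp hx with hxa | hxs
    · exact h.1 (((hC D).mp h.2.2).1 hxa)
    · exact h.2.1 hxs
  have eS2 : (∑ E : Finset α, ∑ y : α,
        if y ∉ E ∧ y ∉ Xstar ∧ E ∉ C ∧ insert y E ∈ C then bmK ρ (insert y E) y else 0)
      = ∑ E : Finset α, ∑ y : α,
        (if y ∉ E ∧ y ∉ Xstar ∧ insert y E ∈ C then bmK ρ (insert y E) y else 0) := by
    refine Finset.sum_congr rfl fun E _ => Finset.sum_congr rfl fun y _ => ?_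
    refine if_congr ⟨fun h => ⟨h.1, h.2.1, h.2.2.2⟩, fun h => ⟨h.1, h.2.1, fun hmem => ?_, h.2.2⟩⟩ rfl rfl
    have hy : y ∈ A ∪ Xstar := ((hC _).mp h.2.2).2 (mem_insert_self y E)
    rcases mem_union.mp hy with hya | hys
    · exact h.1 (((hC E).mp hmem).1 hya)
    · exact h.2.1 hys
  rw [eS1, eS2]
  -- Step 2 : reindex the incoming observable sum to be indexed by the head of the arc
  have eS2' : (∑ E : Finset α, ∑ y : α,
        (if y ∉ E ∧ y ∉ Xstar ∧ insert y E ∈ C then bmK ρ (insert y E) y else 0))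
      = ∑ D : Finset α, ∑ y : α, (if y ∈ D ∧ y ∉ Xstar ∧ D ∈ C then bmK ρ D y else 0) := by
    rw [Finset.sum_comm]
    rw [Finset.sum_comm (f := fun D (y : α) => if y ∈ D ∧ y ∉ Xstar ∧ D ∈ C then bmK ρ D y else 0)]
    refine Finset.sum_congr rfl fun y _ => ?_
    have := reindex_insert (α := α) y (fun B => if y ∉ Xstar ∧ B ∈ C then bmK ρ B y else 0)
    calc (∑ E : Finset α, if y ∉ E ∧ y ∉ Xstar ∧ insert y E ∈ C then bmK ρ (insert y E) y else 0)
        = ∑ E : Finset α, (if y ∉ E then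
            (if y ∉ Xstar ∧ insert y E ∈ C then bmK ρ (insert y E) y else 0) else 0) := by
          refine Finset.sum_congr rfl fun E _ => ?_
          by_cases hE : y ∉ E <;> simp [hE, and_assoc]
      _ = ∑ D : Finset α, (if y ∈ D then
            (if y ∉ Xstar ∧ D ∈ C then bmK ρ D y else 0) else 0) := this
      _ = ∑ D : Finset α, (if y ∈ D ∧ y ∉ Xstar ∧ D ∈ C then bmK ρ D y else 0) := by
          refine Finset.sum_congr rfl fun D _ => ?_
          by_cases hD : y ∈ D <;> simp [hD, and_assoc]
  rw [eS2']
  -- Step 3 : the two internal-arc sums agree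
  have eT : (∑ D : Finset α, ∑ x : α,
        (if x ∉ D ∧ x ∈ Xstar ∧ D ∈ C then bmK ρ (insert x D) x else 0))
      = ∑ D : Finset α, ∑ y : α, (if y ∈ D ∧ y ∈ Xstar ∧ D ∈ C then bmK ρ D y else 0) := by
    rw [Finset.sum_comm]
    rw [Finset.sum_comm (f := fun D (y : α) => if y ∈ D ∧ y ∈ Xstar ∧ D ∈ C then bmK ρ D y else 0)]
    refine Finset.sum_congr rfl fun x _ => ?_
    have := reindex_insert (α := α) x (fun B => if x ∈ Xstar ∧ B.erase x ∈ C then bmK ρ B x else 0)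
    calc (∑ E : Finset α, if x ∉ E ∧ x ∈ Xstar ∧ E ∈ C then bmK ρ (insert x E) x else 0)
        = ∑ E : Finset α, (if x ∉ E then
            (if x ∈ Xstar ∧ (insert x E).erase x ∈ C then bmK ρ (insert x E) x else 0) else 0) := by
          refine Finset.sum_congr rfl fun E _ => ?_
          by_cases hE : x ∉ E
          · rw [if_pos hE, erase_insert hE]
            by_cases h1 : x ∈ Xstar <;> by_cases h2 : E ∈ C <;> simp [hE, h1, h2]
          · simp [hE]
      _ = ∑ D : Finset α, (if x ∈ D then
            (if x ∈ Xstar ∧ D.erase x ∈ C then bmK ρ D x else 0) else 0) := this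
      _ = ∑ D : Finset α, (if x ∈ D ∧ x ∈ Xstar ∧ D ∈ C then bmK ρ D x else 0) := by
          refine Finset.sum_congr rfl fun D _ => ?_
          by_cases hD : x ∈ D
          · by_cases h1 : x ∈ Xstar
            · rw [if_pos hD]
              have := hErase x h1 D hD
              by_cases h2 : D ∈ C
              · simp [hD, h1, h2, this.mpr h2]
              · simp [hD, h1, h2, this]
            · simp [hD, h1]
          · simp [hD]
  -- Step 4 : merge observable and internal arcs into full in/out-flows over C
  have merge1 : ∀ D : Finset α,
      ((∑ x : α, if x ∉ D ∧ x ∉ Xstar ∧ D ∈ C then bmK ρ (insert x D) x else 0)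
        + ∑ x : α, (if x ∉ D ∧ x ∈ Xstar ∧ D ∈ C then bmK ρ (insert x D) x else 0))
      = if D ∈ C then (∑ x : α, if x ∉ D then bmK ρ (insert x D) x else 0) else 0 := by
    intro D
    by_cases hD : D ∈ C
    · rw [if_pos hD, ← Finset.sum_add_distrib]
      refine Finset.sum_congr rfl fun x _ => ?_
      by_cases h1 : x ∉ D <;> by_cases h2 : x ∈ Xstar <;> simp [h1, h2, hD]
    · simp [hD]
  have merge2 : ∀ D : Finset α,
      ((∑ y : α, if y ∈ D ∧ y ∉ Xstar ∧ D ∈ C then bmK ρ D y else 0)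
        + ∑ y : α, (if y ∈ D ∧ y ∈ Xstar ∧ D ∈ C then bmK ρ D y else 0))
      = if D ∈ C then (∑ y : α, if y ∈ D then bmK ρ D y else 0) else 0 := by
    intro D
    by_cases hD : D ∈ C
    · rw [if_pos hD, ← Finset.sum_add_distrib]
      refine Finset.sum_congr rfl fun y _ => ?_
      by_cases h1 : y ∈ D <;> by_cases h2 : y ∈ Xstar <;> simp [h1, h2, hD]
    · simp [hD]
  -- Step 5 : conservation of flow on C
  have key : (∑ D : Finset α, ∑ x : α,
        (if x ∉ D ∧ x ∉ Xstar ∧ D ∈ C then bmK ρ (insert x D) x else 0))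
      - (∑ D : Finset α, ∑ y : α, (if y ∈ D ∧ y ∉ Xstar ∧ D ∈ C then bmK ρ D y else 0))
      = (if ∅ ∈ C then 1 else 0) - (if univ ∈ C then 1 else 0) := by
    have hsplit : (∑ D : Finset α, ∑ x : α,
          (if x ∉ D ∧ x ∉ Xstar ∧ D ∈ C then bmK ρ (insert x D) x else 0))
        - (∑ D : Finset α, ∑ y : α, (if y ∈ D ∧ y ∉ Xstar ∧ D ∈ C then bmK ρ D y else 0))
        = ((∑ D : Finset α, ∑ x : α,
            (if x ∉ D ∧ x ∉ Xstar ∧ D ∈ C then bmK ρ (insert x D) x else 0))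
          + (∑ D : Finset α, ∑ x : α,
            (if x ∉ D ∧ x ∈ Xstar ∧ D ∈ C then bmK ρ (insert x D) x else 0)))
          - ((∑ D : Finset α, ∑ y : α, (if y ∈ D ∧ y ∉ Xstar ∧ D ∈ C then bmK ρ D y else 0))
          + (∑ D : Finset α, ∑ y : α, (if y ∈ D ∧ y ∈ Xstar ∧ D ∈ C then bmK ρ D y else 0))) := by
      rw [eT]; ring
    rw [hsplit, ← Finset.sum_add_distrib, ← Finset.sum_add_distrib,
      Finset.sum_congr rfl (fun D _ => merge1 D), Finset.sum_congr rfl (fun D _ => merge2 D),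
      ← Finset.sum_sub_distrib]
    have per : ∀ D : Finset α,
        ((if D ∈ C then (∑ x : α, if x ∉ D then bmK ρ (insert x D) x else 0) else 0)
          - (if D ∈ C then (∑ y : α, if y ∈ D then bmK ρ D y else 0) else 0))
        = (if D = ∅ then (if ∅ ∈ C then (1:ℝ) else 0) else 0)
          - (if D = univ then (if univ ∈ C then (1:ℝ) else 0) else 0) := by
      intro D
      by_cases hD : D ∈ C
      · rw [if_pos hD, if_pos hD]
        have hcons := conservation ρ hρ1 D
        have : (∑ x : α, if x ∉ D then bmK ρ (insert x D) x else 0)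
            - (∑ y : α, if y ∈ D then bmK ρ D y else 0)
            = (if D = ∅ then 1 else 0) - (if D = univ then 1 else 0) := by
          rw [← neg_sub, hcons]; ring
        rw [this]
        by_cases h1 : D = ∅
        · subst h1
          by_cases h2 : (∅ : Finset α) = univ
          · rw [if_pos rfl, if_pos rfl, if_pos h2, if_pos h2, if_pos hD, if_pos (h2 ▸ hD)]
          · simp [h2, hD]
        · by_cases h2 : D = univ
          · subst h2
            simp [h1, hD]
          · simp [h1, h2]
      · rw [if_neg hD, if_neg hD, sub_zero]
        by_cases h1 : D = ∅
        · subst h1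
          by_cases h2 : (∅ : Finset α) = univ
          · rw [if_pos rfl, if_neg hD, if_pos h2, if_neg (h2 ▸ hD), sub_zero]
          · simp [hD, h2]
        · by_cases h2 : D = univ
          · subst h2
            simp [h1, hD]
          · simp [h1, h2]
    rw [Finset.sum_congr rfl (fun D _ => per D), Finset.sum_sub_distrib]
    congr 1
    · simp
    · simp
  rw [key]
  by_cases h1 : (∅ : Finset α) ∈ C <;> by_cases h2 : (univ : Finset α) ∈ C <;>
    simp [h1, h2]
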